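/- Let (E,h) be a Hermitian holomorphic vector bundle over a compact Kähler manifold (X,ω) of dimension n, and let α be an E-valued (n,0)-form with H(α)=0. Then the (n-1,1)-form ∇''(∇'* G' α) is primitive, i.e. ω ∧ ∇''(∇'* G' α) = 0. -/
import Mathlib


/-!
STATEMENT 2: Let `(E,h)` be a Hermitian holomorphic vector bundle over a compact
Kähler manifold `(X,ω)` of dimension `n`, and `α` an `E`-valued `(n,0)`-form with
vanishing `Δ''`-harmonic part.  Then the `(n-1,1)`-form `∇''(∇'* G' α)` is
primitive, i.e. `ω ∧ ∇''(∇'* G' α) = 0`.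

The Dolbeault complex is axiomatized abstractly; the standing hypotheses are the
Kähler–Hodge identity `[∇'*, L_ω] = -√-1 ∇''`, the anticommutation of `∇''` with
`∇'*`, `∇''² = 0`, commutation of the Green operator with `∇''`, the degree
behaviour of the operators, and the vanishing of forms of holomorphic degree
`> n`.
-/

/-- The space of `E`-valued forms on a compact Kähler manifold, with the operators of
Hodge theory for the Chern connection `∇ = ∇' + ∇''`. -/
structure HodgeSetting (V : Type*) [AddCommGroup V] [Module ℂ V] where
  /-- complex dimension of `X` -/
  n : ℕ
  /-- projection onto the space of forms of bidegree `(p,q)` -/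
  P : ℤ → ℤ → V →ₗ[ℂ] V
  /-- `∇'` -/
  d1 : V →ₗ[ℂ] V
  /-- `∇'' = ∂̄` -/
  d2 : V →ₗ[ℂ] V
  /-- `∇'*` -/
  d1s : V →ₗ[ℂ] V
  /-- `∇''*` -/
  d2s : V →ₗ[ℂ] V
  /-- the Lefschetz operator `L_ω = ω ∧ ·` -/
  L : V →ₗ[ℂ] V
  /-- harmonic projection with respect to `Δ''` -/
  H2 : V →ₗ[ℂ] V
  /-- `G'`, the Green operator of `Δ'` -/
  G1 : V →ₗ[ℂ] V

namespace HodgeSetting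

variable {V : Type*} [AddCommGroup V] [Module ℂ V] (S : HodgeSetting V)

/-- `Δ' = ∇'∇'* + ∇'*∇'` -/
def Lap1 : V →ₗ[ℂ] V := S.d1 ∘ₗ S.d1s + S.d1s ∘ₗ S.d1

end HodgeSetting

/-- For an `E`-valued `(n,0)`-form `α` with vanishing harmonic part,
`∇''(∇'* G' α)` is a primitive `(n-1,1)`-form: `ω ∧ ∇''(∇'* G' α) = 0`. -/
theorem primitive_of_dbar_of_solution
    {V : Type*} [AddCommGroup V] [Module ℂ V] (S : HodgeSetting V)
    -- the Kähler–Hodge identity `[∇'*, L_ω] = -√-1 ∇''`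
    (kahler_id : ∀ x : V, S.d1s (S.L x) - S.L (S.d1s x) = -(Complex.I) • S.d2 x)
    -- `∇''∇'* = -∇'*∇''` (a consequence of the Kähler identities)
    (anticomm : ∀ x : V, S.d2 (S.d1s x) = - S.d1s (S.d2 x))
    -- `∇''² = 0`
    (d2_sq : ∀ x : V, S.d2 (S.d2 x) = 0)
    -- the Green operator commutes with `∇''`
    (G1_d2 : ∀ x : V, S.G1 (S.d2 x) = S.d2 (S.G1 x))
    -- degree behaviour of the operators
    (G1_deg : ∀ (p q : ℤ) (x : V), S.P p q x = x → S.P p q (S.G1 x) = S.G1 x)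
    (d2_deg : ∀ (p q : ℤ) (x : V), S.P p q x = x → S.P p (q + 1) (S.d2 x) = S.d2 x)
    (d1s_deg : ∀ (p q : ℤ) (x : V), S.P p q x = x → S.P (p - 1) q (S.d1s x) = S.d1s x)
    (L_deg : ∀ (p q : ℤ) (x : V), S.P p q x = x → S.P (p + 1) (q + 1) (S.L x) = S.L x)
    -- forms of holomorphic degree greater than `n` vanish
    (vanish : ∀ (p q : ℤ) (x : V), S.P p q x = x → (S.n : ℤ) < p → x = 0)
    -- `α` is an `(n,0)`-form with vanishing `Δ''`-harmonic part
    (α : V) (hα : S.P S.n 0 α = α) (hharm : S.H2 α = 0) :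
    S.L (S.d2 (S.d1s (S.G1 α))) = 0 := by
  have hG : S.P S.n 0 (S.G1 α) = S.G1 α := G1_deg _ _ _ hα
  have hd2 : S.P S.n 1 (S.d2 (S.G1 α)) = S.d2 (S.G1 α) := by
    simpa using d2_deg _ _ _ hG
  have hL0 : S.L (S.d2 (S.G1 α)) = 0 :=
    vanish (S.n + 1) 2 _ (L_deg _ _ _ hd2) (by linarith)
  have hk := kahler_id (S.d2 (S.G1 α))
  rw [hL0, d2_sq, smul_zero, map_zero, zero_sub, neg_eq_zero] at hk
  rw [anticomm, map_neg, hk, neg_zero]
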